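/- Let X be a complex Banach space, B a bounded linear operator on X, and x ∈ X. Define σ(t) = exp(−(arctan t)·B) x and ρ(t) = (1+t²)^{−1/2} σ(t) for t ≥ 0. Then: (1) ρ(0) = x; (2) σ is differentiable with σ′(t) = −(1+t²)^{−1} B σ(t) for all t ≥ 0 (equivalently, (1+t²)^{−1/2}·d/dt(√(1+t²)·ρ(t)) + (1+t²)^{−1} B ρ(t) = 0); (3) t·ρ(t) → exp(−(π/2)·B) x in norm as t → ∞; and (4) the function t ↦ t·ρ(t) − exp(−(π/2)·B) x is square-integrable on (0,∞), i.e. ∫_{(0,∞)} ‖t ρ(t) − exp(−(π/2) B) x‖² dt < ∞. -/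

import Mathlib

open MeasureTheory Filter

section aux

variable {X : Type*} [NormedAddCommGroup X] [NormedSpace ℂ X] [CompleteSpace X]

omit [CompleteSpace X] in
lemma stmt17_norm_exp_le (A : X →L[ℂ] X) :
    ‖NormedSpace.exp A‖ ≤ Real.exp ‖A‖ := by
  rw [Real.exp_eq_exp_ℝ, NormedSpace.exp_eq_tsum ℂ, NormedSpace.exp_eq_tsum ℝ]
  refine (norm_tsum_le_tsum_norm (NormedSpace.norm_expSeries_summable' A)).trans ?_
  refine Summable.tsum_le_tsum (fun n => ?_) (NormedSpace.norm_expSeries_summable' A)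
    (NormedSpace.expSeries_summable' (𝕂 := ℝ) ‖A‖)
  rw [norm_smul, smul_eq_mul]
  have h1 : ‖(((Nat.factorial n) : ℂ))⁻¹‖ = (((Nat.factorial n) : ℝ))⁻¹ := by
    rw [norm_inv]; norm_num
  have h2 : ‖A ^ n‖ ≤ ‖A‖ ^ n := by
    cases n with
    | zero => simpa using (show ‖(1 : X →L[ℂ] X)‖ ≤ 1 from ContinuousLinearMap.norm_id_le)
    | succ m => exact norm_pow_le' A m.succ_pos
  rw [h1]
  exact mul_le_mul_of_nonneg_left h2 (by positivity)

lemma stmt17_arctan_le_self {s : ℝ} (hs : 0 ≤ s) : Real.arctan s ≤ s := by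
  have hnn : 0 ≤ Real.arctan s := by
    rw [← Real.arctan_zero]; exact Real.arctan_strictMono.monotone hs
  nth_rewrite 2 [← Real.tan_arctan s]
  exact Real.le_tan hnn (Real.arctan_lt_pi_div_two s)

end aux

theorem stmt17 {X : Type*} [NormedAddCommGroup X] [NormedSpace ℂ X] [CompleteSpace X]
    (B : X →L[ℂ] X) (x : X)
    (σ ρ : ℝ → X)
    (hσ : σ = fun t : ℝ => NormedSpace.exp (((-Real.arctan t : ℝ) : ℂ) • B) x)
    (hρ : ρ = fun t : ℝ => (Real.sqrt (1 + t ^ 2))⁻¹ • σ t) :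
    ρ 0 = x ∧
    (∀ t : ℝ, 0 ≤ t →
      HasDerivAt σ (-(((1 + t ^ 2)⁻¹ : ℝ) • B (σ t))) t) ∧
    Tendsto (fun t : ℝ => t • ρ t) atTop
      (nhds (NormedSpace.exp (((-(Real.pi / 2) : ℝ) : ℂ) • B) x)) ∧
    IntegrableOn
      (fun t : ℝ => ‖t • ρ t - NormedSpace.exp (((-(Real.pi / 2) : ℝ) : ℂ) • B) x‖ ^ 2)
      (Set.Ioi (0 : ℝ)) := by
  set E : ℝ → X := fun r => NormedSpace.exp (((-r : ℝ) : ℂ) • B) x with hE_def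
  -- derivative of E
  have hE : ∀ r : ℝ, HasDerivAt E (-(B (E r))) r := by
    intro r
    have hg : HasDerivAt (fun z : ℂ => (NormedSpace.exp (z • B)) x)
        ((B * NormedSpace.exp (((-r : ℝ) : ℂ) • B)) x) ((-r : ℝ) : ℂ) := by
      simpa using
        (hasDerivAt_exp_smul_const' (𝕂 := ℂ) B ((-r : ℝ) : ℂ)).clm_apply (hasDerivAt_const _ x)
    have hf : HasDerivAt (fun s : ℝ => ((-s : ℝ) : ℂ)) (-1 : ℂ) r := by
      simpa using ((hasDerivAt_id r).neg).ofReal_comp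
    have h2 := hg.scomp r hf
    rw [neg_one_smul ℂ] at h2
    exact h2
  have hσE : σ = E ∘ Real.arctan := by rw [hσ]; rfl
  -- derivative of σ everywhere
  have hσ' : ∀ t : ℝ, HasDerivAt σ (-(((1 + t ^ 2)⁻¹ : ℝ) • B (σ t))) t := by
    intro t
    have := (hE (Real.arctan t)).scomp t (Real.hasDerivAt_arctan' t)
    rw [← hσE] at this
    have hs : σ t = E (Real.arctan t) := by rw [hσE]; rfl
    rw [hs]
    simpa [smul_neg] using this
  have σcont : Continuous σ := continuous_iff_continuousAt.2 fun t => (hσ' t).continuousAt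
  have Econt : Continuous E := continuous_iff_continuousAt.2 fun r => (hE r).continuousAt
  set L : X := NormedSpace.exp (((-(Real.pi / 2) : ℝ) : ℂ) • B) x with hL_def
  have hEL : E (Real.pi / 2) = L := rfl
  -- tendsto of σ
  have htσ : Tendsto σ atTop (nhds L) := by
    rw [hσE]
    have h1 : Tendsto Real.arctan atTop (nhds (Real.pi / 2)) :=
      Real.tendsto_arctan_atTop.mono_right nhdsWithin_le_nhds
    exact (Econt.continuousAt (x := Real.pi / 2)).tendsto.comp h1
  -- scalar tendsto
  have hc : Tendsto (fun t : ℝ => t * (Real.sqrt (1 + t ^ 2))⁻¹) atTop (nhds 1) := by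
    have h1 : Tendsto (fun t : ℝ => (1 + t ^ 2)⁻¹) atTop (nhds 0) := by
      refine tendsto_inv_atTop_zero.comp ?_
      exact tendsto_atTop_add_const_left atTop 1 (tendsto_pow_atTop two_ne_zero)
    have h2 : Tendsto (fun t : ℝ => Real.sqrt (1 - (1 + t ^ 2)⁻¹)) atTop (nhds 1) := by
      have h3 : Tendsto (fun t : ℝ => 1 - (1 + t ^ 2)⁻¹) atTop (nhds 1) := by
        simpa using tendsto_const_nhds.sub h1
      have := (Real.continuous_sqrt.continuousAt (x := (1 : ℝ))).tendsto.comp h3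
      simpa [Function.comp_def] using this
    refine h2.congr' ?_
    filter_upwards [eventually_gt_atTop (0 : ℝ)] with t ht
    have h0 : (0 : ℝ) < 1 + t ^ 2 := by positivity
    rw [show (1 : ℝ) - (1 + t ^ 2)⁻¹ = t ^ 2 / (1 + t ^ 2) by field_simp; ring,
      Real.sqrt_div (sq_nonneg t), Real.sqrt_sq ht.le, div_eq_mul_inv]
  have hrw : (fun t : ℝ => t • ρ t)
      = fun t : ℝ => (t * (Real.sqrt (1 + t ^ 2))⁻¹) • σ t := by
    funext t; rw [hρ]; rw [smul_smul]
  have part3 : Tendsto (fun t : ℝ => t • ρ t) atTop (nhds L) := by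
    rw [hrw]
    simpa using hc.smul htσ
  refine ⟨?_, fun t _ => hσ' t, part3, ?_⟩
  · rw [hρ, hσ]
    simp [NormedSpace.exp_zero]
  -- part 4
  set M : ℝ := ‖B‖ * (Real.exp (Real.pi / 2 * ‖B‖) * ‖x‖) with hM_def
  have hM0 : 0 ≤ M := by positivity
  -- mean value bound
  have hMV : ∀ t : ℝ, 1 < t → ‖σ t - L‖ ≤ M * (Real.pi / 2 - Real.arctan t) := by
    intro t ht
    have hconv : Convex ℝ (Set.Icc (0 : ℝ) (Real.pi / 2)) := convex_Icc _ _
    have hmem1 : Real.arctan t ∈ Set.Icc (0 : ℝ) (Real.pi / 2) := by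
      constructor
      · rw [← Real.arctan_zero]; exact Real.arctan_strictMono.monotone (by linarith)
      · exact (Real.arctan_lt_pi_div_two t).le
    have hmem2 : Real.pi / 2 ∈ Set.Icc (0 : ℝ) (Real.pi / 2) :=
      ⟨by positivity, le_refl _⟩
    have bound : ∀ r ∈ Set.Icc (0 : ℝ) (Real.pi / 2), ‖-(B (E r))‖ ≤ M := by
      intro r hr
      rw [norm_neg]
      calc ‖B (E r)‖ ≤ ‖B‖ * ‖E r‖ := B.le_opNorm _
        _ ≤ M := by
          refine mul_le_mul_of_nonneg_left ?_ (norm_nonneg B)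
          calc ‖E r‖ ≤ ‖NormedSpace.exp (((-r : ℝ) : ℂ) • B)‖ * ‖x‖ :=
                ContinuousLinearMap.le_opNorm _ _
            _ ≤ Real.exp (Real.pi / 2 * ‖B‖) * ‖x‖ := by
                refine mul_le_mul_of_nonneg_right ?_ (norm_nonneg x)
                refine (stmt17_norm_exp_le _).trans ?_
                refine Real.exp_le_exp.2 ?_
                refine le_trans (ContinuousLinearMap.opNorm_smul_le _ _) ?_
                have : ‖((-r : ℝ) : ℂ)‖ = |r| := by
                  rw [Complex.norm_real, Real.norm_eq_abs, abs_neg]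
                rw [this, abs_of_nonneg hr.1]
                exact mul_le_mul_of_nonneg_right hr.2 (norm_nonneg B)
    have := hconv.norm_image_sub_le_of_norm_hasDerivWithin_le
      (f := E) (f' := fun r => -(B (E r)))
      (fun r _ => (hE r).hasDerivWithinAt) bound hmem2 hmem1
    rw [hσE]
    have habs : ‖Real.arctan t - Real.pi / 2‖ = Real.pi / 2 - Real.arctan t := by
      rw [Real.norm_eq_abs, abs_of_nonpos (by linarith [(Real.arctan_lt_pi_div_two t).le])]
      ring
    rw [habs, hEL] at this
    simpa [Function.comp] using this
  -- decay of scalar factor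
  have hcbound : ∀ t : ℝ, 1 < t →
      t * (Real.sqrt (1 + t ^ 2))⁻¹ ≤ 1 ∧
      0 ≤ t * (Real.sqrt (1 + t ^ 2))⁻¹ ∧
      1 - t * (Real.sqrt (1 + t ^ 2))⁻¹ ≤ t⁻¹ := by
    intro t ht
    have ht0 : (0 : ℝ) < t := by linarith
    set s : ℝ := Real.sqrt (1 + t ^ 2) with hs_def
    have hs0 : (0 : ℝ) < s := Real.sqrt_pos.2 (by positivity)
    have hs2 : s ^ 2 = 1 + t ^ 2 := Real.sq_sqrt (by positivity)
    have hst : t ≤ s := by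
      rw [hs_def]
      exact Real.le_sqrt_of_sq_le (by linarith)
    refine ⟨?_, by positivity, ?_⟩
    · rw [← div_eq_mul_inv, div_le_one hs0]; exact hst
    · rw [← div_eq_mul_inv, ← one_div]
      rw [show 1 - t / s = (s - t) / s by field_simp]
      rw [div_le_div_iff₀ hs0 ht0]
      nlinarith
  -- key pointwise bound
  set C : ℝ := M + ‖L‖ with hC_def
  have hC0 : 0 ≤ C := by positivity
  have key : ∀ t : ℝ, 1 < t → ‖t • ρ t - L‖ ≤ C * t⁻¹ := by
    intro t ht
    have ht0 : (0 : ℝ) < t := by linarith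
    obtain ⟨hc1, hc0, hc2⟩ := hcbound t ht
    set c : ℝ := t * (Real.sqrt (1 + t ^ 2))⁻¹ with hc_def
    have hsplit : t • ρ t - L = c • (σ t - L) + (c - 1) • L := by
      have : t • ρ t = c • σ t := by rw [hρ]; rw [smul_smul]
      rw [this, smul_sub, sub_smul, one_smul]
      abel
    rw [hsplit]
    calc ‖c • (σ t - L) + (c - 1) • L‖ ≤ ‖c • (σ t - L)‖ + ‖(c - 1) • L‖ := norm_add_le _ _
      _ = |c| * ‖σ t - L‖ + |c - 1| * ‖L‖ := by rw [norm_smul, norm_smul]; simp [Real.norm_eq_abs]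
      _ ≤ 1 * (M * t⁻¹) + t⁻¹ * ‖L‖ := by
          refine add_le_add ?_ ?_
          · refine mul_le_mul (by rwa [abs_of_nonneg hc0]) ?_ (norm_nonneg _) zero_le_one
            refine (hMV t ht).trans ?_
            refine mul_le_mul_of_nonneg_left ?_ hM0
            rw [← Real.arctan_inv_of_pos ht0]
            exact stmt17_arctan_le_self (by positivity)
          · refine mul_le_mul_of_nonneg_right ?_ (norm_nonneg L)
            rw [abs_of_nonpos (by linarith), neg_sub]
            exact hc2
      _ = C * t⁻¹ := by rw [hC_def]; ring
  -- continuity of the integrand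
  have ρcont : Continuous ρ := by
    rw [hρ]
    refine Continuous.smul (f := fun t : ℝ => (Real.sqrt (1 + t ^ 2))⁻¹) ?_ σcont
    refine Continuous.inv₀ (Real.continuous_sqrt.comp (continuous_const.add (continuous_pow 2))) ?_
    intro t
    exact (Real.sqrt_pos.2 (by positivity)).ne'
  have gcont : Continuous (fun t : ℝ => ‖t • ρ t - L‖ ^ 2) :=
    (((continuous_id.smul ρcont).sub continuous_const).norm).pow 2
  have h01 : IntegrableOn (fun t : ℝ => ‖t • ρ t - L‖ ^ 2) (Set.Ioc 0 1) :=
    gcont.integrableOn_Ioc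
  have h1i : IntegrableOn (fun t : ℝ => ‖t • ρ t - L‖ ^ 2) (Set.Ioi 1) := by
    have hint : IntegrableOn (fun t : ℝ => C ^ 2 * t ^ (-2 : ℝ)) (Set.Ioi 1) :=
      (integrableOn_Ioi_rpow_of_lt (by norm_num) zero_lt_one).const_mul _
    refine Integrable.mono' hint (gcont.aestronglyMeasurable.restrict) ?_
    rw [ae_restrict_iff' measurableSet_Ioi]
    refine Eventually.of_forall fun t ht => ?_
    have ht1 : (1 : ℝ) < t := ht
    have ht0 : (0 : ℝ) < t := by linarith
    rw [Real.norm_eq_abs, abs_of_nonneg (by positivity)]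
    calc ‖t • ρ t - L‖ ^ 2 ≤ (C * t⁻¹) ^ 2 :=
        pow_le_pow_left₀ (norm_nonneg _) (key t ht1) 2
      _ = C ^ 2 * t ^ (-2 : ℝ) := by
          rw [mul_pow, show (-2 : ℝ) = -((2 : ℕ) : ℝ) by norm_num,
            Real.rpow_neg ht0.le, Real.rpow_natCast, inv_pow]
  have := h01.union h1i
  rwa [Set.Ioc_union_Ioi_eq_Ioi zero_le_one] at this
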